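/- Let β > 1/4 and let α, γ > 0 be such that the polynomial f(z) = α + βz − z³ + z⁵ + γz⁶ satisfies f(x) ≥ 0 for all real x and f'(x) ≥ 0 for all x ≥ 0. Then f preserves nonnegativity of symmetric 2×2 matrices (f(A) is entrywise nonnegative for every entrywise nonnegative symmetric real 2×2 matrix A), but its odd part f_odd(z) = βz − z³ + z⁵ does not: there exists an entrywise nonnegative symmetric real 2×2 matrix B such that f_odd(B) has a negative entry. -/
import Mathlib

/-- Evaluation of `f(z) = α + βz - z³ + z⁵ + γz⁶` at a 2×2 real matrix. -/
noncomputable def fmat16 (α β γ : ℝ) (A : Matrix (Fin 2) (Fin 2) ℝ) :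
    Matrix (Fin 2) (Fin 2) ℝ :=
  α • (1 : Matrix (Fin 2) (Fin 2) ℝ) + β • A - A ^ 3 + A ^ 5 + γ • A ^ 6

/-- Evaluation of the odd part `f_odd(z) = βz - z³ + z⁵` at a 2×2 real matrix. -/
noncomputable def fmat16odd (β : ℝ) (A : Matrix (Fin 2) (Fin 2) ℝ) :
    Matrix (Fin 2) (Fin 2) ℝ :=
  β • A - A ^ 3 + A ^ 5

-- scalar monotonicity lemma
lemma mono16 (α β γ : ℝ) (hβ : 1 / 4 < β) (hγ : 0 < γ)
    (hf' : ∀ x : ℝ, 0 ≤ x →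
      0 ≤ deriv (fun t : ℝ => α + β * t - t ^ 3 + t ^ 5 + γ * t ^ 6) x)
    (mu lam : ℝ) (h1 : mu ≤ lam) (h2 : 0 ≤ lam + mu) :
    α + β * mu - mu ^ 3 + mu ^ 5 + γ * mu ^ 6 ≤
      α + β * lam - lam ^ 3 + lam ^ 5 + γ * lam ^ 6 := by
  rcases le_or_gt 0 mu with hmu | hmu
  · have hmono : MonotoneOn (fun t : ℝ => α + β * t - t ^ 3 + t ^ 5 + γ * t ^ 6)
        (Set.Ici (0:ℝ)) := by
      apply monotoneOn_of_deriv_nonneg (convex_Ici 0)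
      · fun_prop
      · fun_prop
      · intro x hx
        rw [interior_Ici] at hx
        exact hf' x hx.le
    exact hmono (Set.mem_Ici.mpr hmu) (Set.mem_Ici.mpr (le_trans hmu h1)) h1
  · have hlam : 0 < lam := by linarith
    have hp : (-mu) ^ 6 ≤ lam ^ 6 := by
      apply pow_le_pow_left₀ (by linarith) (by linarith)
    nlinarith [mul_nonneg hlam.le (sq_nonneg (lam ^ 2 - 1/2)),
      mul_nonneg (by linarith : (0:ℝ) ≤ -mu) (sq_nonneg (mu ^ 2 - 1/2)),
      mul_nonneg hγ.le (by nlinarith : (0:ℝ) ≤ lam ^ 6 - mu ^ 6),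
      mul_nonneg (by linarith : (0:ℝ) ≤ β - 1/4) (by linarith : (0:ℝ) ≤ lam - mu)]

set_option maxHeartbeats 2000000 in
/-- For `β > 1/4` and `α, γ > 0` such that `f(z) = α + βz - z³ + z⁵ + γz⁶`
satisfies `f ≥ 0` on `ℝ` and `f' ≥ 0` on `ℝ₊`, the function `f` preserves
nonnegativity of symmetric 2×2 matrices but its odd part `βz - z³ + z⁵`
does not. -/
theorem stmt_16 (α β γ : ℝ) (hβ : 1 / 4 < β) (hα : 0 < α) (hγ : 0 < γ)
    (hf : ∀ x : ℝ, 0 ≤ α + β * x - x ^ 3 + x ^ 5 + γ * x ^ 6)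
    (hf' : ∀ x : ℝ, 0 ≤ x →
      0 ≤ deriv (fun t : ℝ => α + β * t - t ^ 3 + t ^ 5 + γ * t ^ 6) x) :
    (∀ A : Matrix (Fin 2) (Fin 2) ℝ, A.IsSymm → (∀ i j, 0 ≤ A i j) →
      ∀ i j, 0 ≤ fmat16 α β γ A i j) ∧
    (∃ B : Matrix (Fin 2) (Fin 2) ℝ, B.IsSymm ∧ (∀ i j, 0 ≤ B i j) ∧
      ∃ i j, fmat16odd β B i j < 0) := by
  constructor
  · intro A hsymm hA
    set a := A 0 0 with ha
    set b := A 0 1 with hb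
    set c := A 1 1 with hc
    have hb' : A 1 0 = b := hsymm.apply 0 1
    set s := Real.sqrt ((a - c) ^ 2 + 4 * b ^ 2) with hsdef
    have hs0 : 0 ≤ s := Real.sqrt_nonneg _
    have hs2 : s ^ 2 = (a - c) ^ 2 + 4 * b ^ 2 := Real.sq_sqrt (by positivity)
    have habs : |a - c| ≤ s := by
      rw [← Real.sqrt_sq_eq_abs]
      exact Real.sqrt_le_sqrt (by nlinarith [sq_nonneg b])
    have hac1 : a - c ≤ s := le_trans (le_abs_self _) habs
    have hac2 : c - a ≤ s := le_trans (by rw [abs_sub_comm]; exact le_abs_self _) habs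
    set lam := (a + c + s) / 2 with hlamdef
    set mu := (a + c - s) / 2 with hmudef
    have hlm : lam - mu = s := by rw [hlamdef, hmudef]; ring
    set p2 := a + c with hp2
    set q2 := b * b - a * c with hq2
    set p3 := p2 * p2 + q2 with hp3
    set q3 := p2 * q2 with hq3
    set p4 := p3 * p2 + q3 with hp4
    set q4 := p3 * q2 with hq4
    set p5 := p4 * p2 + q4 with hp5
    set q5 := p4 * q2 with hq5
    set p6 := p5 * p2 + q5 with hp6
    set q6 := p5 * q2 with hq6
    set c1 := β - p3 + p5 + γ * p6 with hc1def
    set c0 := α - q3 + q5 + γ * q6 with hc0def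
    clear_value a b c s lam mu p2 q2 p3 q3 p4 q4 p5 q5 p6 q6 c1 c0
    have e2 : A * A = p2 • A + q2 • (1 : Matrix (Fin 2) (Fin 2) ℝ) := by
      ext i j
      fin_cases i <;> fin_cases j <;>
        simp [Matrix.mul_apply, Fin.sum_univ_two, Matrix.one_apply, hb'] <;>
        simp only [ha, hb, hc, hp2, hq2] <;> ring
    have h3 : A ^ 3 = p3 • A + q3 • (1 : Matrix (Fin 2) (Fin 2) ℝ) := by
      have h : A ^ 3 = (A * A) * A := by rw [pow_succ, pow_two]
      rw [h, e2, Matrix.add_mul, Matrix.smul_mul, Matrix.smul_mul, Matrix.one_mul, e2]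
      rw [hp3, hq3]; module
    have h4 : A ^ 4 = p4 • A + q4 • (1 : Matrix (Fin 2) (Fin 2) ℝ) := by
      have h : A ^ 4 = A ^ 3 * A := pow_succ A 3
      rw [h, h3, Matrix.add_mul, Matrix.smul_mul, Matrix.smul_mul, Matrix.one_mul, e2]
      rw [hp4, hq4]; module
    have h5 : A ^ 5 = p5 • A + q5 • (1 : Matrix (Fin 2) (Fin 2) ℝ) := by
      have h : A ^ 5 = A ^ 4 * A := pow_succ A 4
      rw [h, h4, Matrix.add_mul, Matrix.smul_mul, Matrix.smul_mul, Matrix.one_mul, e2]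
      rw [hp5, hq5]; module
    have h6 : A ^ 6 = p6 • A + q6 • (1 : Matrix (Fin 2) (Fin 2) ℝ) := by
      have h : A ^ 6 = A ^ 5 * A := pow_succ A 5
      rw [h, h5, Matrix.add_mul, Matrix.smul_mul, Matrix.smul_mul, Matrix.one_mul, e2]
      rw [hp6, hq6]; module
    have hrep : fmat16 α β γ A = c1 • A + c0 • (1 : Matrix (Fin 2) (Fin 2) ℝ) := by
      rw [fmat16, h3, h5, h6, hc1def, hc0def]
      module
    have l2l : lam ^ 2 = p2 * lam + q2 := by
      rw [hlamdef, hp2, hq2]; linear_combination hs2 / 4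
    have l2m : mu ^ 2 = p2 * mu + q2 := by
      rw [hmudef, hp2, hq2]; linear_combination hs2 / 4
    have l3l : lam ^ 3 = p3 * lam + q3 := by
      rw [hp3, hq3]; linear_combination (lam + p2) * l2l
    have l3m : mu ^ 3 = p3 * mu + q3 := by
      rw [hp3, hq3]; linear_combination (mu + p2) * l2m
    have l4l : lam ^ 4 = p4 * lam + q4 := by
      rw [hp4, hq4]; linear_combination lam * l3l + p3 * l2l
    have l4m : mu ^ 4 = p4 * mu + q4 := by
      rw [hp4, hq4]; linear_combination mu * l3m + p3 * l2m
    have l5l : lam ^ 5 = p5 * lam + q5 := by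
      rw [hp5, hq5]; linear_combination lam * l4l + p4 * l2l
    have l5m : mu ^ 5 = p5 * mu + q5 := by
      rw [hp5, hq5]; linear_combination mu * l4m + p4 * l2m
    have l6l : lam ^ 6 = p6 * lam + q6 := by
      rw [hp6, hq6]; linear_combination lam * l5l + p5 * l2l
    have l6m : mu ^ 6 = p6 * mu + q6 := by
      rw [hp6, hq6]; linear_combination mu * l5m + p5 * l2m
    have hcl : c1 * lam + c0 = α + β * lam - lam ^ 3 + lam ^ 5 + γ * lam ^ 6 := by
      rw [hc1def, hc0def]; linear_combination l3l - l5l - γ * l6l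
    have hcm : c1 * mu + c0 = α + β * mu - mu ^ 3 + mu ^ 5 + γ * mu ^ 6 := by
      rw [hc1def, hc0def]; linear_combination l3m - l5m - γ * l6m
    have hfl : 0 ≤ c1 * lam + c0 := by rw [hcl]; exact hf lam
    have hfm : 0 ≤ c1 * mu + c0 := by rw [hcm]; exact hf mu
    have htr : 0 ≤ lam + mu := by
      rw [hlamdef, hmudef]; linarith [hA 0 0, hA 1 1]
    have hmlam : mu ≤ lam := by linarith [hlm, hs0]
    have hmono := mono16 α β γ hβ hγ hf' mu lam hmlam htr
    have hdiff : 0 ≤ c1 * s := by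
      have h : c1 * s = (c1 * lam + c0) - (c1 * mu + c0) := by
        rw [← hlm]; ring
      rw [h, hcl, hcm]; linarith
    have hbnn : 0 ≤ b := by rw [hb]; exact hA 0 1
    have entry00 : 0 ≤ c1 * a + c0 := by
      rcases eq_or_lt_of_le hs0 with hseq | hspos
      · have hla : lam = a := by
          have hD : (a - c) ^ 2 + 4 * b ^ 2 = 0 := by rw [← hs2, ← hseq]; ring
          have h1 : (a - c) ^ 2 = 0 := by linarith [sq_nonneg (a - c), sq_nonneg b]
          have hacq : a - c = 0 := pow_eq_zero_iff (two_ne_zero) |>.mp h1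
          rw [hlamdef, hp2, ← hseq]; linarith
        rw [← hla]; exact hfl
      · have ham : 0 ≤ a - mu := by rw [hmudef]; linarith
        have hla : 0 ≤ lam - a := by rw [hlamdef]; linarith
        have key : s * (c1 * a + c0) =
            (a - mu) * (c1 * lam + c0) + (lam - a) * (c1 * mu + c0) := by
          linear_combination (-(c1 * a) - c0) * hlm
        have hnn : s * 0 ≤ s * (c1 * a + c0) := by
          rw [mul_zero, key]
          exact add_nonneg (mul_nonneg ham hfl) (mul_nonneg hla hfm)
        exact le_of_mul_le_mul_left hnn hspos
    have entry11 : 0 ≤ c1 * c + c0 := by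
      rcases eq_or_lt_of_le hs0 with hseq | hspos
      · have hla : lam = c := by
          have hD : (a - c) ^ 2 + 4 * b ^ 2 = 0 := by rw [← hs2, ← hseq]; ring
          have h1 : (a - c) ^ 2 = 0 := by linarith [sq_nonneg (a - c), sq_nonneg b]
          have hacq : a - c = 0 := pow_eq_zero_iff (two_ne_zero) |>.mp h1
          rw [hlamdef, hp2, ← hseq]; linarith
        rw [← hla]; exact hfl
      · have ham : 0 ≤ c - mu := by rw [hmudef]; linarith
        have hla : 0 ≤ lam - c := by rw [hlamdef]; linarith
        have key : s * (c1 * c + c0) =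
            (c - mu) * (c1 * lam + c0) + (lam - c) * (c1 * mu + c0) := by
          linear_combination (-(c1 * c) - c0) * hlm
        have hnn : s * 0 ≤ s * (c1 * c + c0) := by
          rw [mul_zero, key]
          exact add_nonneg (mul_nonneg ham hfl) (mul_nonneg hla hfm)
        exact le_of_mul_le_mul_left hnn hspos
    have entry01 : 0 ≤ c1 * b := by
      rcases eq_or_lt_of_le hs0 with hseq | hspos
      · have hb0 : b = 0 := by
          have hD : (a - c) ^ 2 + 4 * b ^ 2 = 0 := by rw [← hs2, ← hseq]; ring
          have h1 : b ^ 2 = 0 := by linarith [sq_nonneg (a - c), sq_nonneg b]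
          exact pow_eq_zero_iff (two_ne_zero) |>.mp h1
        rw [hb0]; simp
      · have hc1nn : 0 ≤ c1 := by
          have h2 : s * 0 ≤ s * c1 := by rw [mul_zero, mul_comm s c1]; exact hdiff
          exact le_of_mul_le_mul_left h2 hspos
        exact mul_nonneg hc1nn hbnn
    intro i j
    rw [hrep]
    fin_cases i <;> fin_cases j <;>
      simp [Matrix.add_apply, Matrix.smul_apply, Matrix.one_apply, smul_eq_mul, hb']
    · rw [← ha]; exact entry00
    · rw [← hb]; exact entry01
    · exact entry01
    · rw [← hc]; exact entry11
  · refine ⟨!![0, 2/5; 2/5, 3/5], ?_, ?_, 0, 0, ?_⟩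
    · unfold Matrix.IsSymm
      ext i j
      fin_cases i <;> fin_cases j <;> simp
    · intro i j
      fin_cases i <;> fin_cases j <;> norm_num
    · set B : Matrix (Fin 2) (Fin 2) ℝ := !![0, 2/5; 2/5, 3/5] with hB
      have h2 : B * B = !![4/25, 6/25; 6/25, 13/25] := by
        ext i j
        fin_cases i <;> fin_cases j <;>
          simp [hB, Matrix.mul_apply, Fin.sum_univ_two] <;> norm_num
      have h3 : B ^ 3 = !![12/125, 26/125; 26/125, 51/125] := by
        have h : B ^ 3 = (B * B) * B := by rw [pow_succ, pow_two]
        rw [h, h2]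
        ext i j
        fin_cases i <;> fin_cases j <;>
          simp [hB, Matrix.mul_apply, Fin.sum_univ_two] <;> norm_num
      have h5 : B ^ 5 = B ^ 3 * (B * B) := by rw [← pow_two, ← pow_add]
      have h5' : B ^ 5 = !![204/3125, 410/3125; 410/3125, 819/3125] := by
        rw [h5, h3, h2]
        ext i j
        fin_cases i <;> fin_cases j <;>
          simp [Matrix.mul_apply, Fin.sum_univ_two] <;> norm_num
      rw [fmat16odd, h3, h5']
      simp [hB]
      norm_num
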